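/- Let A and B be real n×n matrices and T > 0. There exists a constant C ≥ 0 such that for every positive integer N, with step size h = T/N, the Strang splitting with exact subflows is second-order convergent: ‖(exp((h/2)A) · exp(hB) · exp((h/2)A))^N − exp(T(A+B))‖ ≤ C/N². -/

import Mathlib

open Matrix NormedSpace

attribute [local instance] Matrix.linftyOpNormedRing Matrix.linftyOpNormedAlgebra

set_option linter.unusedSectionVars false
set_option linter.unreachableTactic false
set_option linter.unusedTactic false
set_option maxHeartbeats 1000000

section aux
variable {𝔸 : Type*} [NormedRing 𝔸] [NormedAlgebra ℝ 𝔸] [CompleteSpace 𝔸]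

lemma my_norm_exp_le [NormOneClass 𝔸] (x : 𝔸) : ‖exp x‖ ≤ Real.exp ‖x‖ := by
  rw [exp_eq_tsum ℝ]
  refine (norm_tsum_le_tsum_norm (norm_expSeries_summable' x)).trans ?_
  rw [Real.exp_eq_exp_ℝ, exp_eq_tsum ℝ]
  refine Summable.tsum_le_tsum (fun n => ?_) (norm_expSeries_summable' x)
    (expSeries_summable' (𝕂 := ℝ) ‖x‖)
  rw [norm_smul, norm_inv, Real.norm_natCast, smul_eq_mul]
  gcongr
  exact norm_pow_le x n

lemma my_pow_sub_pow [NormOneClass 𝔸] (a b : 𝔸) {K : ℝ} (ha : ‖a‖ ≤ K) (hb : ‖b‖ ≤ K) (hK : 1 ≤ K) :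
    ∀ N : ℕ, ‖a ^ N - b ^ N‖ ≤ N * K ^ N * ‖a - b‖ := by
  have hK0 : (0:ℝ) ≤ K := zero_le_one.trans hK
  intro N
  induction N with
  | zero => simp
  | succ N ih =>
    have key : a ^ (N+1) - b ^ (N+1) = a ^ N * (a - b) + (a ^ N - b ^ N) * b := by
      noncomm_ring
    have hpow : ‖a ^ N‖ ≤ K ^ N := by
      calc ‖a ^ N‖ ≤ ‖a‖ ^ N := norm_pow_le a N
        _ ≤ K ^ N := by gcongr
    calc ‖a ^ (N+1) - b ^ (N+1)‖ = ‖a ^ N * (a - b) + (a ^ N - b ^ N) * b‖ := by rw [key]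
      _ ≤ ‖a ^ N * (a - b)‖ + ‖(a ^ N - b ^ N) * b‖ := norm_add_le _ _
      _ ≤ ‖a ^ N‖ * ‖a - b‖ + ‖a ^ N - b ^ N‖ * ‖b‖ := by
          gcongr <;> exact norm_mul_le _ _
      _ ≤ K ^ N * ‖a - b‖ + (N * K ^ N * ‖a - b‖) * K := by
          gcongr
      _ ≤ K ^ (N+1) * ‖a - b‖ + (N * K ^ (N+1) * ‖a - b‖) := by
          rw [pow_succ]
          have h1 : K ^ N ≤ K ^ N * K := le_mul_of_one_le_right (pow_nonneg hK0 N) hK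
          have h2 : (0:ℝ) ≤ ‖a - b‖ := norm_nonneg _
          have h3 : (0:ℝ) ≤ (N:ℝ) := Nat.cast_nonneg N
          nlinarith
      _ = ((N+1 : ℕ) : ℝ) * K ^ (N+1) * ‖a - b‖ := by push_cast; ring

end aux

section aux
variable {E : Type*} [NormedAddCommGroup E] [NormedSpace ℝ E]

lemma my_iteratedDerivWithin_eq {f : ℝ → E} {N : ℕ} (hf : ContDiff ℝ N f)
    {s : Set ℝ} (hs : UniqueDiffOn ℝ s) {x : ℝ} (hx : x ∈ s) {k : ℕ} (hk : k ≤ N) :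
    iteratedDerivWithin k f s x = iteratedDeriv k f x := by
  rw [iteratedDerivWithin_eq_iteratedFDerivWithin, iteratedDeriv_eq_iteratedFDeriv]
  congr 1
  have h1 : HasFTaylorSeriesUpToOn (N : ℕ∞) f (ftaylorSeries ℝ f) s :=
    (contDiff_iff_ftaylorSeries.1 hf).hasFTaylorSeriesUpToOn s
  exact (h1.eq_iteratedFDerivWithin_of_uniqueDiffOn (by exact_mod_cast hk) hs hx).symm

end aux

section aux2
variable {𝔸 : Type*} [NormedRing 𝔸] [NormedAlgebra ℝ 𝔸] [CompleteSpace 𝔸]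

lemma my_contDiff_exp_smul (M : 𝔸) : ContDiff ℝ 3 (fun t : ℝ => exp (t • M)) := by
  have hexp : ContDiff ℝ 3 (exp : 𝔸 → 𝔸) :=
    contDiff_iff_contDiffAt.2 fun x => (exp_analytic (𝕂 := ℝ) x).contDiffAt
  exact hexp.comp (contDiff_id.smul contDiff_const)

lemma my_hasDerivAt_half (M : 𝔸) (h : ℝ) :
    HasDerivAt (fun t : ℝ => exp ((t / 2) • M)) ((2⁻¹ : ℝ) • (exp ((h / 2) • M) * M)) h := by
  have h1 := hasDerivAt_exp_smul_const (𝕂 := ℝ) M (h / 2)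
  have h2 : HasDerivAt (fun t : ℝ => t / 2) 2⁻¹ h := by
    simpa using (hasDerivAt_id h).div_const 2
  simpa [Function.comp_def] using h1.scomp h h2

end aux2

section aux3
variable {𝔸 : Type*} [NormedRing 𝔸] [NormedAlgebra ℝ 𝔸] [CompleteSpace 𝔸]

lemma my_strang_local (A B : 𝔸) (T : ℝ) (hT : 0 < T) :
    ∃ C : ℝ, 0 ≤ C ∧ ∀ h ∈ Set.Icc (0:ℝ) T,
      ‖exp ((h/2) • A) * exp (h • B) * exp ((h/2) • A) - exp (h • (A+B))‖
        ≤ C * h ^ 3 := by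
  set u : ℝ → 𝔸 := fun t => exp ((t/2) • A) with hu_def
  set v : ℝ → 𝔸 := fun t => exp (t • B) with hv_def
  set e : ℝ → 𝔸 := fun t => exp (t • (A+B)) with he_def
  set f : ℝ → 𝔸 := fun t => u t * v t * u t - e t with hf_def
  have hu : ∀ h : ℝ, HasDerivAt u ((2⁻¹ : ℝ) • (u h * A)) h := fun h => my_hasDerivAt_half A h
  have hv : ∀ h : ℝ, HasDerivAt v (v h * B) h := fun h => hasDerivAt_exp_smul_const B h
  have he : ∀ h : ℝ, HasDerivAt e (e h * (A+B)) h := fun h => hasDerivAt_exp_smul_const (A+B) h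
  set D : ℝ → 𝔸 := fun h =>
    ((2⁻¹ : ℝ) • (u h * A) * v h + u h * (v h * B)) * u h
      + u h * v h * ((2⁻¹ : ℝ) • (u h * A)) - e h * (A+B) with hD_def
  have hD : ∀ h : ℝ, HasDerivAt f (D h) h := fun h =>
    (((hu h).mul (hv h)).mul (hu h)).sub (he h)
  have hderiv : deriv f = D := funext fun h => (hD h).deriv
  have hu0 : u 0 = 1 := by simp [hu_def, exp_zero]
  have hv0 : v 0 = 1 := by simp [hv_def, exp_zero]
  have he0 : e 0 = 1 := by simp [he_def, exp_zero]
  have k0 : iteratedDeriv 0 f 0 = 0 := by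
    simp [iteratedDeriv_zero, hf_def, hu0, hv0, he0]
  have k1 : iteratedDeriv 1 f 0 = 0 := by
    rw [iteratedDeriv_one, hderiv]
    simp only [hD_def, hu0, hv0, he0, one_mul, mul_one]
    module
  have k2 : iteratedDeriv 2 f 0 = 0 := by
    rw [show (2:ℕ) = 1+1 from rfl, iteratedDeriv_succ, iteratedDeriv_one, hderiv]
    have hW := (((((((hu 0).mul_const A).const_smul (2⁻¹ : ℝ)).mul (hv 0)).add
        ((hu 0).mul ((hv 0).mul_const B))).mul (hu 0)).add
        ((((hu 0).mul (hv 0)).mul (((hu 0).mul_const A).const_smul (2⁻¹ : ℝ))))).sub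
        ((he 0).mul_const (A+B))
    rw [(show HasDerivAt D _ 0 from hW).deriv]
    simp only [Pi.smul_apply, Pi.mul_apply, Pi.add_apply, hu0, hv0, he0, one_mul, mul_one]
    simp only [smul_mul_assoc, mul_smul_comm, smul_smul, mul_add, add_mul, smul_add]
    module
  -- smoothness
  have hA3 : ContDiff ℝ 3 u := (my_contDiff_exp_smul A).comp (contDiff_id.div_const 2)
  have hf3 : ContDiff ℝ 3 f := ((hA3.mul (my_contDiff_exp_smul B)).mul hA3).sub
    (my_contDiff_exp_smul (A+B))
  have hUD : UniqueDiffOn ℝ (Set.Icc (0:ℝ) T) := uniqueDiffOn_Icc hT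
  have h0mem : (0:ℝ) ∈ Set.Icc (0:ℝ) T := Set.left_mem_Icc.2 hT.le
  obtain ⟨C, hC⟩ := exists_taylor_mean_remainder_bound (n := 2) hT.le
    (by exact_mod_cast hf3.contDiffOn : ContDiffOn ℝ (2+1 : ℕ) f (Set.Icc 0 T))
  have htaylor : ∀ x : ℝ, taylorWithinEval f 2 (Set.Icc (0:ℝ) T) 0 x = 0 := by
    intro x
    rw [taylor_within_apply]
    have e0 : iteratedDerivWithin 0 f (Set.Icc (0:ℝ) T) 0 = 0 := by
      rw [my_iteratedDerivWithin_eq (N := 3) hf3 hUD h0mem (by norm_num)]; exact k0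
    have e1 : iteratedDerivWithin 1 f (Set.Icc (0:ℝ) T) 0 = 0 := by
      rw [my_iteratedDerivWithin_eq (N := 3) hf3 hUD h0mem (by norm_num)]; exact k1
    have e2 : iteratedDerivWithin 2 f (Set.Icc (0:ℝ) T) 0 = 0 := by
      rw [my_iteratedDerivWithin_eq (N := 3) hf3 hUD h0mem (by norm_num)]; exact k2
    simp [Finset.sum_range_succ, e0, e1, e2]
  refine ⟨max C 0, le_max_right _ _, fun h hh => ?_⟩
  have := hC h hh
  rw [htaylor h, sub_zero, sub_zero] at this
  have hh3 : (0:ℝ) ≤ h ^ 3 := pow_nonneg hh.1 3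
  calc ‖f h‖ ≤ C * h ^ 3 := this
    _ ≤ max C 0 * h ^ 3 := by gcongr; exact le_max_left _ _

end aux3

/-- Second-order global convergence of Strang splitting with exact subflows for
the linear system `x' = (A + B)x` on `[0, T]`:  with `h = T/N`,
`‖(exp((h/2)A)·exp(hB)·exp((h/2)A))^N - exp(T(A+B))‖ ≤ C / N²`. -/
theorem strang_second_order_convergence {n : ℕ}
    (A B : Matrix (Fin n) (Fin n) ℝ) (T : ℝ) (hT : 0 < T) :
    ∃ C : ℝ, 0 ≤ C ∧ ∀ N : ℕ, 0 < N →
      ‖(exp ((T / N / 2) • A) * exp ((T / N) • B) * exp ((T / N / 2) • A)) ^ N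
          - exp (T • (A + B))‖ ≤ C / (N : ℝ) ^ 2 := by
  rcases Nat.eq_zero_or_pos n with hn | hn
  · subst hn
    haveI : Subsingleton (Matrix (Fin 0) (Fin 0) ℝ) := ⟨fun a b => by ext i j; exact i.elim0⟩
    refine ⟨0, le_refl 0, fun N hN => ?_⟩
    rw [Subsingleton.elim ((exp ((T / N / 2) • A) * exp ((T / N) • B)
      * exp ((T / N / 2) • A)) ^ N - exp (T • (A + B))) 0]
    simp
  · haveI : Nonempty (Fin n) := ⟨⟨0, hn⟩⟩
    obtain ⟨C₀, hC₀, hloc⟩ := my_strang_local A B T hT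
    have hR : 0 ≤ ‖A‖ + ‖B‖ := add_nonneg (norm_nonneg _) (norm_nonneg _)
    set R := ‖A‖ + ‖B‖ with hR_def
    refine ⟨C₀ * T ^ 3 * Real.exp (T * R), by positivity, fun N hN => ?_⟩
    have hNpos : (0:ℝ) < N := Nat.cast_pos.2 hN
    set h := T / (N:ℝ) with hh_def
    have hh0 : 0 ≤ h := le_of_lt (div_pos hT hNpos)
    have hhT : h ≤ T := div_le_self hT.le (by exact_mod_cast hN)
    have hNh : (N:ℝ) * h = T := by rw [hh_def]; field_simp
    have hsplit : exp (T • (A+B)) = (exp (h • (A+B))) ^ N := by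
      rw [← Matrix.exp_nsmul, ← Nat.cast_smul_eq_nsmul ℝ, smul_smul, hNh]
    have key : T / (N:ℝ) / 2 = h / 2 := rfl
    rw [hsplit]
    set a := exp ((h/2) • A) * exp (h • B) * exp ((h/2) • A) with ha_def
    set b := exp (h • (A+B)) with hb_def
    have hexpu : ‖exp ((h/2) • A)‖ ≤ Real.exp (h/2 * ‖A‖) := by
      refine (my_norm_exp_le _).trans (Real.exp_le_exp.2 ?_)
      rw [norm_smul, Real.norm_eq_abs, abs_of_nonneg (by linarith : (0:ℝ) ≤ h/2)]
    have hexpv : ‖exp (h • B)‖ ≤ Real.exp (h * ‖B‖) := by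
      refine (my_norm_exp_le _).trans (Real.exp_le_exp.2 ?_)
      rw [norm_smul, Real.norm_eq_abs, abs_of_nonneg hh0]
    have hKa : ‖a‖ ≤ Real.exp (h * R) := by
      calc ‖a‖ ≤ ‖exp ((h/2) • A) * exp (h • B)‖ * ‖exp ((h/2) • A)‖ := norm_mul_le _ _
        _ ≤ (‖exp ((h/2) • A)‖ * ‖exp (h • B)‖) * ‖exp ((h/2) • A)‖ := by
            gcongr
            exact norm_mul_le _ _
        _ ≤ (Real.exp (h/2 * ‖A‖) * Real.exp (h * ‖B‖)) * Real.exp (h/2 * ‖A‖) := by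
            gcongr <;> positivity
        _ = Real.exp (h * R) := by
            rw [← Real.exp_add, ← Real.exp_add, hR_def]; ring_nf
    have hKb : ‖b‖ ≤ Real.exp (h * R) := by
      refine (my_norm_exp_le _).trans (Real.exp_le_exp.2 ?_)
      rw [norm_smul, Real.norm_eq_abs, abs_of_nonneg hh0]
      exact mul_le_mul_of_nonneg_left (norm_add_le A B) hh0
    have hK1 : 1 ≤ Real.exp (h * R) := Real.one_le_exp (mul_nonneg hh0 hR)
    have hab : ‖a - b‖ ≤ C₀ * h ^ 3 := hloc h ⟨hh0, hhT⟩
    have hKN : Real.exp (h * R) ^ N = Real.exp (T * R) := by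
      rw [← Real.exp_nat_mul, ← mul_assoc, hNh]
    calc ‖a ^ N - b ^ N‖ ≤ N * Real.exp (h * R) ^ N * ‖a - b‖ :=
          my_pow_sub_pow a b hKa hKb hK1 N
      _ ≤ N * Real.exp (T * R) * (C₀ * h ^ 3) := by
          rw [hKN]
          exact mul_le_mul_of_nonneg_left hab (by positivity)
      _ = C₀ * T ^ 3 * Real.exp (T * R) / (N:ℝ) ^ 2 := by
          rw [hh_def, div_pow]
          field_simp
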